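/- Let S be a commutative monoid generated by nonzero elements s_1,…,s_d, graded as S = ⨿_{k≥0} S_k with S_k + S_l ⊆ S_{k+l} and S_0 = {0}, where each generator s_i is homogeneous of positive degree; grade R = ℤ[t_1,…,t_d] by deg t_i = deg s_i. Define t^a ~ t^b iff t^a − t^b ∈ R_+ I (an equivalence relation on monomials of R), let Λ be a complete set of representatives of the ~-classes, for s ∈ S let Λ_s = {t^a ∈ Λ : Σ_i a_i s_i = s}, and for each s with |Λ_s| ≥ 2, after enumerating Λ_s = {t^{a_1},…,t^{a_p}}, set G_s = {t^{a_1} − t^{a_i} : i = 2,…,p}. Then ⋃_{s : |Λ_s| ≥ 2} G_s is a minimal homogeneous generating system of the ideal I = ker φ (it generates I and no proper subset generates I); in particular, I is minimally generated by Σ_{s ∈ S} (|Λ_s| − 1) elements. -/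

import Mathlib

open MvPolynomial

/-- The monomial `t^a = ∏ i, t_i ^ a i` in the polynomial ring `ℤ[t_1, …, t_d]`. -/
noncomputable def monomialOf {d : ℕ} (a : Fin d → ℕ) : MvPolynomial (Fin d) ℤ :=
  ∏ i, X i ^ a i

/-- The surjection `φ : ℤ[t_1, …, t_d] → ℤ[S]`, `t_i ↦ x^{s_i}`, onto the semigroup
ring of the additively written commutative monoid `S` with generators `s i`. -/
noncomputable def semigroupHom {d : ℕ} {S : Type} [AddCommMonoid S] (s : Fin d → S) :
    MvPolynomial (Fin d) ℤ →ₐ[ℤ] AddMonoidAlgebra ℤ S :=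
  MvPolynomial.aeval (fun i => AddMonoidAlgebra.single (s i) 1)

/-- The augmentation ideal `R₊` of `ℤ[t_1, …, t_d]`: polynomials with zero constant
term. -/
noncomputable def augIdeal (d : ℕ) : Ideal (MvPolynomial (Fin d) ℤ) :=
  RingHom.ker (constantCoeff : MvPolynomial (Fin d) ℤ →+* ℤ)

open Finsupp

section Aux
variable {d : ℕ} {S : Type} [AddCommMonoid S] (s : Fin d → S)

/-- product of singles -/
lemma prodSingle {ι : Type*} (t : Finset ι) (g : ι → S) :
    ∏ i ∈ t, AddMonoidAlgebra.single (g i) (1 : ℤ) =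
      AddMonoidAlgebra.single (∑ i ∈ t, g i) 1 := by
  classical
  induction t using Finset.induction_on with
  | empty => simp [AddMonoidAlgebra.one_def]
  | insert _ _ h ih =>
      rw [Finset.prod_insert h, Finset.sum_insert h, ih,
        AddMonoidAlgebra.single_mul_single, one_mul]

lemma monomialOf_eq (a : Fin d → ℕ) :
    monomialOf a = monomial (Finsupp.equivFunOnFinite.symm a) (1 : ℤ) := by
  classical
  set m := Finsupp.equivFunOnFinite.symm a with hm
  have ha : a = ⇑m := (Equiv.apply_symm_apply equivFunOnFinite a).symm
  rw [← prod_X_pow_eq_monomial, monomialOf]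
  rw [show (∏ i, X i ^ a i : MvPolynomial (Fin d) ℤ) = ∏ i, X i ^ m i from
    Finset.prod_congr rfl fun i _ => by rw [ha]]
  exact (Finset.prod_subset (Finset.subset_univ m.support)
    (fun i _ hi => by rw [Finsupp.notMem_support_iff.mp hi, pow_zero])).symm

lemma phi_monomial (m : Fin d →₀ ℕ) (c : ℤ) :
    semigroupHom s (monomial m c) = AddMonoidAlgebra.single (weight s m) c := by
  rw [semigroupHom, aeval_monomial]
  have : (Finsupp.prod m fun i k => AddMonoidAlgebra.single (s i) (1:ℤ) ^ k) =
      AddMonoidAlgebra.single (weight s m) 1 := by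
    rw [Finsupp.prod, weight_apply, Finsupp.sum]
    rw [← prodSingle]
    exact Finset.prod_congr rfl fun i _ => by
      rw [AddMonoidAlgebra.single_pow, one_pow]
  rw [this]
  rw [Algebra.algebraMap_eq_smul_one, zsmul_eq_mul, AddMonoidAlgebra.intCast_def]
  simp [AddMonoidAlgebra.single_mul_single]

lemma sum_univ_smul_eq_weight (m : Fin d →₀ ℕ) : ∑ i, m i • s i = weight s m := by
  rw [weight_apply, Finsupp.sum]
  exact (Finset.sum_subset (Finset.subset_univ m.support)
    (fun i _ hi => by rw [Finsupp.notMem_support_iff.mp hi, zero_nsmul])).symm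

lemma mem_ker_iff [DecidableEq S] (f : MvPolynomial (Fin d) ℤ) :
    f ∈ RingHom.ker (semigroupHom s) ↔
      ∀ τ : S, ∑ m ∈ f.support.filter (fun m => weight s m = τ), coeff m f = 0 := by
  have hφ : semigroupHom s f =
      ∑ m ∈ f.support, AddMonoidAlgebra.single (weight s m) (coeff m f) := by
    conv_lhs => rw [f.as_sum, map_sum]
    exact Finset.sum_congr rfl fun m _ => phi_monomial s m _
  rw [RingHom.mem_ker, hφ]
  constructor
  · intro h τ
    have h2 : (∑ m ∈ f.support,
        AddMonoidAlgebra.single (weight s m) (coeff m f) : AddMonoidAlgebra ℤ S).coeff τ = 0 := by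
      rw [h]; rfl
    rw [AddMonoidAlgebra.coeff_sum, Finsupp.finset_sum_apply] at h2
    calc ∑ m ∈ f.support.filter (fun m => weight s m = τ), coeff m f
        = ∑ m ∈ f.support, (AddMonoidAlgebra.single (weight s m) (coeff m f)).coeff τ := by
          rw [Finset.sum_filter]
          exact Finset.sum_congr rfl fun m _ => by
            rw [AddMonoidAlgebra.coeff_single, Finsupp.single_apply]
      _ = 0 := h2
  · intro h
    apply AddMonoidAlgebra.ext
    apply Finsupp.ext
    intro τ
    rw [AddMonoidAlgebra.coeff_sum, Finsupp.finset_sum_apply, AddMonoidAlgebra.coeff_zero,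
      Finsupp.coe_zero, Pi.zero_apply]
    calc ∑ m ∈ f.support, (AddMonoidAlgebra.single (weight s m) (coeff m f)).coeff τ
        = ∑ m ∈ f.support.filter (fun m => weight s m = τ), coeff m f := by
          rw [Finset.sum_filter]
          exact Finset.sum_congr rfl fun m _ => by
            rw [AddMonoidAlgebra.coeff_single, Finsupp.single_apply]
      _ = 0 := h τ

lemma binomial_mem_ker {m m' : Fin d →₀ ℕ} (h : weight s m = weight s m') :
    monomial m (1:ℤ) - monomial m' 1 ∈ RingHom.ker (semigroupHom s) := by
  rw [RingHom.mem_ker, map_sub, phi_monomial, phi_monomial, h, sub_self]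

lemma weight_eq_of_sub_mem_ker {m m' : Fin d →₀ ℕ}
    (h : monomial m (1:ℤ) - monomial m' 1 ∈ RingHom.ker (semigroupHom s)) :
    weight s m = weight s m' := by
  rw [RingHom.mem_ker, map_sub, phi_monomial, phi_monomial, sub_eq_zero] at h
  exact (AddMonoidAlgebra.single_left_inj one_ne_zero).mp h

lemma deg_weight (deg : S → ℕ) (hdeg0 : deg 0 = 0)
    (hdegadd : ∀ x y, deg (x+y) = deg x + deg y) (m : Fin d →₀ ℕ) :
    weight (fun i => deg (s i)) m = deg (weight s m) := by
  let D : S →+ ℕ := { toFun := deg, map_zero' := hdeg0, map_add' := hdegadd }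
  have key : (weight (fun i => deg (s i)) : (Fin d →₀ ℕ) →+ ℕ) = D.comp (weight s) := by
    apply Finsupp.addHom_ext
    intro i n
    have h1 : weight (fun i => deg (s i)) (Finsupp.single i n) = n • deg (s i) := by
      rw [weight_apply, Finsupp.sum_single_index]; rw [zero_nsmul]
    have h2 : weight s (Finsupp.single i n) = n • s i := by
      rw [weight_apply, Finsupp.sum_single_index]; rw [zero_nsmul]
    rw [AddMonoidHom.comp_apply, h1, h2]
    exact (map_nsmul D n (s i)).symm
  exact DFunLike.congr_fun key m

/-- binomials with equal weight -/
def BinSet : Set (MvPolynomial (Fin d) ℤ) :=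
  {p | ∃ m m' : Fin d →₀ ℕ, weight s m = weight s m' ∧ p = monomial m 1 - monomial m' 1}

def MonSet (d : ℕ) : Set (MvPolynomial (Fin d) ℤ) :=
  {p | ∃ c : Fin d →₀ ℕ, c ≠ 0 ∧ p = monomial c 1}

def ProdSet : Set (MvPolynomial (Fin d) ℤ) :=
  {p | ∃ c m m' : Fin d →₀ ℕ, c ≠ 0 ∧ weight s m = weight s m' ∧
    p = monomial c 1 * (monomial m 1 - monomial m' 1)}

def CSet (deg : S → ℕ) (n : ℕ) : Set (MvPolynomial (Fin d) ℤ) :=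
  {p | ∃ c m m' : Fin d →₀ ℕ, c ≠ 0 ∧ weight s m = weight s m' ∧
    weight (fun i => deg (s i)) (c + m) = n ∧
    p = monomial c 1 * (monomial m 1 - monomial m' 1)}

lemma ker_le_span_bin (f : MvPolynomial (Fin d) ℤ)
    (hker : f ∈ RingHom.ker (semigroupHom s)) : f ∈ Submodule.span ℤ (BinSet s) := by
  classical
  suffices H : ∀ n (f : MvPolynomial (Fin d) ℤ), f.support.card ≤ n →
      f ∈ RingHom.ker (semigroupHom s) → f ∈ Submodule.span ℤ (BinSet s) from
    H f.support.card f le_rfl hker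
  intro n
  induction n with
  | zero =>
      intro f hcard _
      have : f.support = ∅ := Finset.card_eq_zero.mp (Nat.le_zero.mp hcard)
      rw [MvPolynomial.support_eq_empty.mp this]
      exact zero_mem _
  | succ n ih =>
      intro f hcard hker
      by_cases hf : f = 0
      · rw [hf]; exact zero_mem _
      obtain ⟨m, hm⟩ := Finset.nonempty_iff_ne_empty.mpr
        (fun h => hf (MvPolynomial.support_eq_empty.mp h))
      have hsum := (mem_ker_iff s f).mp hker (weight s m)
      have hmf : m ∈ f.support.filter (fun m' => weight s m' = weight s m) :=
        Finset.mem_filter.mpr ⟨hm, rfl⟩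
      have hexists : ∃ m' ∈ f.support.filter (fun m' => weight s m' = weight s m),
          m' ≠ m := by
        by_contra hcon
        push_neg at hcon
        have heq : f.support.filter (fun m' => weight s m' = weight s m) = {m} :=
          Finset.eq_singleton_iff_unique_mem.mpr ⟨hmf, hcon⟩
        rw [heq, Finset.sum_singleton] at hsum
        exact (MvPolynomial.mem_support_iff.mp hm) hsum
      obtain ⟨m', hm'f, hne⟩ := hexists
      have hm's : m' ∈ f.support := (Finset.mem_filter.mp hm'f).1
      have hτ' : weight s m' = weight s m := (Finset.mem_filter.mp hm'f).2
      set c := coeff m f with hc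
      set b : MvPolynomial (Fin d) ℤ := monomial m 1 - monomial m' 1 with hb
      have hbker : b ∈ RingHom.ker (semigroupHom s) := binomial_mem_ker s hτ'.symm
      set f' := f - c • b with hf'
      have hf'ker : f' ∈ RingHom.ker (semigroupHom s) := by
        refine sub_mem hker ?_
        rw [MvPolynomial.smul_eq_C_mul]
        exact Ideal.mul_mem_left _ _ hbker
      have hcoeffb : coeff m b = 1 := by
        rw [hb, MvPolynomial.coeff_sub, MvPolynomial.coeff_monomial,
          MvPolynomial.coeff_monomial, if_pos rfl, if_neg hne, sub_zero]
      have hsupp : f'.support ⊆ f.support.erase m := by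
        intro x hx
        have hxf : coeff x f' ≠ 0 := MvPolynomial.mem_support_iff.mp hx
        by_cases hxm : x = m
        · exfalso
          apply hxf
          rw [hxm, hf', MvPolynomial.coeff_sub, MvPolynomial.coeff_smul, hcoeffb]
          rw [smul_eq_mul, mul_one, ← hc, sub_self]
        · refine Finset.mem_erase.mpr ⟨hxm, ?_⟩
          by_contra hxs
          apply hxf
          have h0 : coeff x f = 0 := MvPolynomial.notMem_support_iff.mp hxs
          have hxm' : x ≠ m' := fun h => hxs (h ▸ hm's)
          rw [hf', MvPolynomial.coeff_sub, MvPolynomial.coeff_smul, h0, hb,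
            MvPolynomial.coeff_sub, MvPolynomial.coeff_monomial,
            MvPolynomial.coeff_monomial, if_neg (Ne.symm hxm), if_neg (Ne.symm hxm')]
          simp
      have hcard' : f'.support.card ≤ n := by
        have h1 : (f.support.erase m).card < f.support.card :=
          Finset.card_erase_lt_of_mem hm
        have := Finset.card_le_card hsupp
        omega
      have hmem' := ih f' hcard' hf'ker
      have hfeq : f = f' + c • b := by rw [hf']; abel
      rw [hfeq]
      exact add_mem hmem' (Submodule.smul_mem _ _
        (Submodule.subset_span ⟨m, m', hτ'.symm, rfl⟩))

lemma aug_le_span_mon (f : MvPolynomial (Fin d) ℤ) (hf : f ∈ augIdeal d) :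
    f ∈ Submodule.span ℤ (MonSet d) := by
  have h0 : (0 : Fin d →₀ ℕ) ∉ f.support := by
    rw [MvPolynomial.notMem_support_iff]
    exact hf
  rw [f.as_sum]
  refine Submodule.sum_mem _ fun m hm => ?_
  have : (monomial m (coeff m f) : MvPolynomial (Fin d) ℤ) = coeff m f • monomial m 1 := by
    rw [MvPolynomial.smul_monomial, smul_eq_mul, mul_one]
  rw [this]
  exact Submodule.smul_mem _ _ (Submodule.subset_span ⟨m, fun h => h0 (h ▸ hm), rfl⟩)

lemma mul_le_span_prod (x : MvPolynomial (Fin d) ℤ)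
    (hx : x ∈ augIdeal d * RingHom.ker (semigroupHom s)) :
    x ∈ Submodule.span ℤ (ProdSet s) := by
  refine Submodule.mul_induction_on hx ?_ (fun u v hu hv => add_mem hu hv)
  intro p hp q hq
  have h1 := aug_le_span_mon p hp
  have h2 := ker_le_span_bin s q hq
  have h3 := Submodule.mul_mem_mul h1 h2
  rw [Submodule.span_mul_span] at h3
  refine Submodule.span_mono ?_ h3
  rintro z hz
  rw [Set.mem_mul] at hz
  obtain ⟨u, ⟨c, hc, rfl⟩, v, ⟨m, m', hw, rfl⟩, rfl⟩ := hz
  exact ⟨c, m, m', hc, hw, rfl⟩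

lemma one_le_weight {w : Fin d → ℕ} (hw : ∀ i, 1 ≤ w i) {c : Fin d →₀ ℕ} (hc : c ≠ 0) :
    1 ≤ weight w c := by
  obtain ⟨i, hi⟩ : ∃ i, c i ≠ 0 := by
    by_contra h
    push_neg at h
    exact hc (Finsupp.ext h)
  refine Nat.one_le_iff_ne_zero.mpr fun h0 => ?_
  rw [weight_apply, Finsupp.sum, Finset.sum_eq_zero_iff] at h0
  have := h0 i (Finsupp.mem_support_iff.mpr hi)
  rw [smul_eq_mul] at this
  rcases Nat.mul_eq_zero.mp this with h | h
  · exact hi h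
  · have := hw i; omega

lemma homog_mem_span_CSet (deg : S → ℕ) (hdeg0 : deg 0 = 0)
    (hdegadd : ∀ x y, deg (x+y) = deg x + deg y)
    {h : MvPolynomial (Fin d) ℤ} {n : ℕ}
    (hK : h ∈ augIdeal d * RingHom.ker (semigroupHom s))
    (hh : IsWeightedHomogeneous (fun i => deg (s i)) h n) :
    h ∈ Submodule.span ℤ (CSet s deg n) := by
  set w : Fin d → ℕ := fun i => deg (s i) with hwdef
  have h1 : h ∈ Submodule.span ℤ (ProdSet s) := mul_le_span_prod s h hK
  have h2 : weightedHomogeneousComponent w n h = h :=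
    hh.weightedHomogeneousComponent_same
  have h3 : weightedHomogeneousComponent w n h ∈
      Submodule.map (weightedHomogeneousComponent w n) (Submodule.span ℤ (ProdSet s)) :=
    Submodule.mem_map_of_mem h1
  rw [Submodule.map_span] at h3
  rw [← h2]
  refine Submodule.span_le.mpr ?_ h3
  rintro z ⟨p, ⟨c, m, m', hc, hws, rfl⟩, rfl⟩
  have hmono : (monomial c 1 * (monomial m 1 - monomial m' 1) : MvPolynomial (Fin d) ℤ) =
      monomial (c + m) 1 - monomial (c + m') 1 := by
    rw [mul_sub, MvPolynomial.monomial_mul, MvPolynomial.monomial_mul, one_mul]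
  have hwm : weight w m = weight w m' := by
    rw [hwdef, deg_weight s deg hdeg0 hdegadd, deg_weight s deg hdeg0 hdegadd, hws]
  have hwc : weight w (c + m') = weight w (c + m) := by
    rw [map_add, map_add, hwm]
  have hp_hom : IsWeightedHomogeneous w
      (monomial c 1 * (monomial m 1 - monomial m' 1) : MvPolynomial (Fin d) ℤ)
      (weight w (c + m)) := by
    rw [hmono, ← mem_weightedHomogeneousSubmodule]
    refine sub_mem ?_ ?_
    · exact isWeightedHomogeneous_monomial w _ _ rfl
    · exact isWeightedHomogeneous_monomial w _ _ hwc
  by_cases hn : weight w (c + m) = n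
  · have := hp_hom.weightedHomogeneousComponent_same (w := w)
    rw [hn] at this
    rw [this]
    exact Submodule.subset_span ⟨c, m, m', hc, hws, hn, rfl⟩
  · rw [hp_hom.weightedHomogeneousComponent_ne n (fun h => hn h.symm)]
    exact zero_mem _

lemma coeSymm (a : Fin d → ℕ) : ⇑(Finsupp.equivFunOnFinite.symm a) = a :=
  Equiv.apply_symm_apply equivFunOnFinite a

lemma monomialOf_coe (x : Fin d →₀ ℕ) : monomialOf (⇑x) = monomial x (1 : ℤ) := by
  rw [monomialOf_eq, Finsupp.equivFunOnFinite_symm_coe]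

lemma binomial_mem_spanG (deg : S → ℕ) (hdeg0 : deg 0 = 0)
    (hdegadd : ∀ x y, deg (x+y) = deg x + deg y) (hw1 : ∀ i, 1 ≤ deg (s i))
    (Λ : Set (Fin d → ℕ)) (rep : (Fin d → ℕ) → (Fin d → ℕ))
    (hrepΛ : ∀ a, rep a ∈ Λ)
    (hrepK : ∀ a, monomialOf a - monomialOf (rep a) ∈
      augIdeal d * RingHom.ker (semigroupHom s))
    (ρ : S → (Fin d → ℕ))
    (hρ : ∀ σ : S, {a | a ∈ Λ ∧ ∑ i, a i • s i = σ}.Nonempty →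
      ρ σ ∈ Λ ∧ ∑ i, ρ σ i • s i = σ)
    (G : Set (MvPolynomial (Fin d) ℤ))
    (hG : G = {p | ∃ (σ : S) (a : Fin d → ℕ), a ∈ Λ ∧ (∑ i, a i • s i) = σ ∧ a ≠ ρ σ ∧
      p = monomialOf (ρ σ) - monomialOf a}) :
    ∀ n (m m' : Fin d →₀ ℕ), weight s m = weight s m' →
      weight (fun i => deg (s i)) m = n →
      monomial m (1:ℤ) - monomial m' 1 ∈ Ideal.span G := by
  set w : Fin d → ℕ := fun i => deg (s i) with hwdef
  intro n
  induction n using Nat.strong_induction_on with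
  | _ n ih =>
  intro m m' hws hwn
  set Rep : (Fin d →₀ ℕ) → (Fin d →₀ ℕ) :=
    fun x => Finsupp.equivFunOnFinite.symm (rep ⇑x) with hRep
  have hRepK : ∀ x : Fin d →₀ ℕ, monomial x (1:ℤ) - monomial (Rep x) 1 ∈
      augIdeal d * RingHom.ker (semigroupHom s) := by
    intro x
    have := hrepK ⇑x
    rwa [monomialOf_coe, monomialOf_eq] at this
  have hRepW : ∀ x : Fin d →₀ ℕ, weight s (Rep x) = weight s x := by
    intro x
    exact (weight_eq_of_sub_mem_ker s (Ideal.mul_le_right (hRepK x))).symm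
  have hsum_eq : ∀ x : Fin d →₀ ℕ, (∑ i, rep ⇑x i • s i) = weight s (Rep x) := by
    intro x
    rw [← sum_univ_smul_eq_weight]
    exact Finset.sum_congr rfl fun i _ => by rw [hRep, coeSymm]
  set σ := weight s m with hσ
  have hNE : {a | a ∈ Λ ∧ ∑ i, a i • s i = σ}.Nonempty :=
    ⟨rep ⇑m, hrepΛ _, by rw [hsum_eq m, hRepW m]⟩
  obtain ⟨hρΛ, hρσ⟩ := hρ σ hNE
  have gmem : ∀ x : Fin d → ℕ, x ∈ Λ → (∑ i, x i • s i) = σ →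
      monomialOf (ρ σ) - monomialOf x ∈ Ideal.span G := by
    intro x hxΛ hxσ
    by_cases hx : x = ρ σ
    · rw [hx, sub_self]; exact zero_mem _
    · refine Ideal.subset_span ?_
      rw [hG]
      exact ⟨σ, x, hxΛ, hxσ, hx, rfl⟩
  have hdegσ : deg σ = n := by
    rw [hσ, ← deg_weight s deg hdeg0 hdegadd, ← hwdef]
    exact hwn
  have hKspan : ∀ x : Fin d →₀ ℕ, weight s x = σ →
      monomial x (1:ℤ) - monomial (Rep x) 1 ∈ Ideal.span G := by
    intro x hxσ
    have hwx : weight w x = n := by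
      rw [hwdef, deg_weight s deg hdeg0 hdegadd, hxσ]
      exact hdegσ
    have hhom : IsWeightedHomogeneous w (monomial x (1:ℤ) - monomial (Rep x) 1) n := by
      rw [← mem_weightedHomogeneousSubmodule]
      refine sub_mem ?_ ?_
      · exact isWeightedHomogeneous_monomial w _ _ hwx
      · refine isWeightedHomogeneous_monomial w _ _ ?_
        rw [hwdef, deg_weight s deg hdeg0 hdegadd, hRepW x, hxσ]
        exact hdegσ
    have hspan := homog_mem_span_CSet s deg hdeg0 hdegadd (hRepK x) hhom
    have hCsub : CSet s deg n ⊆ ((Ideal.span G).restrictScalars ℤ : Set _) := by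
      rintro p ⟨c, m₁, m₁', hc, hws₁, hwn₁, rfl⟩
      rw [← hwdef] at hwn₁
      have hc1 : 1 ≤ weight w c := one_le_weight (by rw [hwdef]; exact hw1) hc
      have hlt : weight w m₁ < n := by
        rw [map_add] at hwn₁
        omega
      have := ih (weight w m₁) hlt m₁ m₁' hws₁ rfl
      exact Ideal.mul_mem_left _ _ this
    exact Submodule.span_le.mpr hCsub hspan
  have h₁ := hKspan m rfl
  have h₂ := hKspan m' hws.symm
  have g₁ := gmem (rep ⇑m) (hrepΛ _) (by rw [hsum_eq m, hRepW m])
  have g₂ := gmem (rep ⇑m') (hrepΛ _) (by rw [hsum_eq m', hRepW m', ← hws])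
  simp only [monomialOf_eq] at g₁ g₂
  have g₁' : (monomial (Finsupp.equivFunOnFinite.symm (ρ σ)) (1:ℤ) -
      monomial (Rep m) 1) ∈ Ideal.span G := g₁
  have g₂' : (monomial (Finsupp.equivFunOnFinite.symm (ρ σ)) (1:ℤ) -
      monomial (Rep m') 1) ∈ Ideal.span G := g₂
  have hfinal : monomial m (1:ℤ) - monomial m' 1 =
      (monomial m (1:ℤ) - monomial (Rep m) 1) -
      (monomial m' (1:ℤ) - monomial (Rep m') 1) +
      ((monomial (Finsupp.equivFunOnFinite.symm (ρ σ)) (1:ℤ) - monomial (Rep m') 1) -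
       (monomial (Finsupp.equivFunOnFinite.symm (ρ σ)) (1:ℤ) - monomial (Rep m) 1)) := by
    abel
  rw [hfinal]
  exact add_mem (sub_mem h₁ h₂) (sub_mem g₂' g₁')

noncomputable def theta [DecidableEq (Fin d → ℕ)]
    (rep : (Fin d → ℕ) → (Fin d → ℕ)) (a₀ : Fin d → ℕ) :
    MvPolynomial (Fin d) ℤ →ₗ[ℤ] ℤ :=
  (MvPolynomial.basisMonomials (Fin d) ℤ).constr ℤ
    (fun m => if rep ⇑m = a₀ then (1:ℤ) else 0)

lemma theta_monomial [DecidableEq (Fin d → ℕ)]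
    (rep : (Fin d → ℕ) → (Fin d → ℕ)) (a₀ : Fin d → ℕ) (m : Fin d →₀ ℕ) (c : ℤ) :
    theta rep a₀ (monomial m c) = if rep ⇑m = a₀ then c else 0 := by
  have h1 : (monomial m c : MvPolynomial (Fin d) ℤ) = c • monomial m 1 := by
    rw [MvPolynomial.smul_monomial, smul_eq_mul, mul_one]
  have h2 : (monomial m (1:ℤ)) = (basisMonomials (Fin d) ℤ) m := by
    rw [coe_basisMonomials]
  rw [h1, map_smul, h2, theta, Module.Basis.constr_basis]
  simp [mul_ite]

lemma theta_ker_K [DecidableEq (Fin d → ℕ)]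
    (rep : (Fin d → ℕ) → (Fin d → ℕ)) (a₀ : Fin d → ℕ)
    (hcongr : ∀ x y : Fin d →₀ ℕ, monomial x (1:ℤ) - monomial y 1 ∈
      augIdeal d * RingHom.ker (semigroupHom s) → rep ⇑x = rep ⇑y) :
    ∀ z ∈ augIdeal d * RingHom.ker (semigroupHom s), theta rep a₀ z = 0 := by
  intro z hz
  have h1 : z ∈ Submodule.span ℤ (ProdSet s) := mul_le_span_prod s z hz
  have h2 : Submodule.span ℤ (ProdSet s) ≤ LinearMap.ker (theta rep a₀) := by
    refine Submodule.span_le.mpr ?_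
    rintro p ⟨c, m, m', hc, hws, rfl⟩
    have hmono : (monomial c 1 * (monomial m 1 - monomial m' 1) : MvPolynomial (Fin d) ℤ) =
        monomial (c + m) 1 - monomial (c + m') 1 := by
      rw [mul_sub, MvPolynomial.monomial_mul, MvPolynomial.monomial_mul, one_mul]
    have hK : monomial (c + m) (1:ℤ) - monomial (c + m') 1 ∈
        augIdeal d * RingHom.ker (semigroupHom s) := by
      rw [← hmono]
      refine Ideal.mul_mem_mul ?_ (binomial_mem_ker s hws)
      rw [augIdeal, RingHom.mem_ker, MvPolynomial.constantCoeff_monomial, if_neg hc]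
    have := hcongr _ _ hK
    rw [SetLike.mem_coe, LinearMap.mem_ker, hmono, map_sub, theta_monomial, theta_monomial, this, sub_self]
  exact h2 h1

end Aux

/-- for a graded commutative monoid `S` with `S₀ = {0}`, generated by
nonzero homogeneous elements `s_1, …, s_d`, the binomials `t^{ρ σ} - t^a`
(`a ∈ Λ_σ`, `a ≠ ρ σ`), where `Λ` is a complete set of representatives of the
congruence `t^a ∼ t^b ⇔ t^a - t^b ∈ R₊ I` and `ρ σ ∈ Λ_σ` is a chosen
representative, form a minimal homogeneous generating system of `I = ker φ`. -/
theorem stmt12 {d : ℕ} {S : Type} [AddCommMonoid S] (s : Fin d → S)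
    (hs : ∀ i, s i ≠ 0)
    (hgen : ∀ x : S, ∃ a : Fin d → ℕ, x = ∑ i, a i • s i)
    (deg : S → ℕ)
    (hdeg0 : ∀ x : S, deg x = 0 ↔ x = 0)
    (hdegadd : ∀ x y : S, deg (x + y) = deg x + deg y)
    (Λ : Set (Fin d → ℕ))
    (hΛ : ∀ a : Fin d → ℕ, ∃! b : Fin d → ℕ, b ∈ Λ ∧
      monomialOf a - monomialOf b ∈ augIdeal d * RingHom.ker (semigroupHom s))
    (ρ : S → (Fin d → ℕ))
    (hρ : ∀ σ : S, {a | a ∈ Λ ∧ ∑ i, a i • s i = σ}.Nonempty →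
      ρ σ ∈ Λ ∧ ∑ i, ρ σ i • s i = σ)
    (G : Set (MvPolynomial (Fin d) ℤ))
    (hG : G = {p | ∃ (σ : S) (a : Fin d → ℕ), a ∈ Λ ∧ (∑ i, a i • s i) = σ ∧ a ≠ ρ σ ∧
      p = monomialOf (ρ σ) - monomialOf a}) :
    (∀ p ∈ G, ∃ n : ℕ, MvPolynomial.IsWeightedHomogeneous (fun i => deg (s i)) p n) ∧
    Ideal.span G = RingHom.ker (semigroupHom s) ∧
    ∀ G' : Set (MvPolynomial (Fin d) ℤ), G' ⊂ G →
      Ideal.span G' ≠ RingHom.ker (semigroupHom s) := by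
  classical
  have hdeg0' : deg 0 = 0 := (hdeg0 0).mpr rfl
  have hw1 : ∀ i, 1 ≤ deg (s i) := fun i =>
    Nat.one_le_iff_ne_zero.mpr (fun h => hs i ((hdeg0 _).mp h))
  choose rep hrep using hΛ
  have hrepΛ : ∀ a, rep a ∈ Λ := fun a => (hrep a).1.1
  have hrepK : ∀ a, monomialOf a - monomialOf (rep a) ∈
      augIdeal d * RingHom.ker (semigroupHom s) := fun a => (hrep a).1.2
  have hrepU : ∀ a b, b ∈ Λ → monomialOf a - monomialOf b ∈
      augIdeal d * RingHom.ker (semigroupHom s) → b = rep a :=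
    fun a b h1 h2 => (hrep a).2 b ⟨h1, h2⟩
  have hrepself : ∀ a ∈ Λ, rep a = a := fun a ha =>
    (hrepU a a ha (by rw [sub_self]; exact zero_mem _)).symm
  have hrepcongr : ∀ x y : Fin d → ℕ, monomialOf x - monomialOf y ∈
      augIdeal d * RingHom.ker (semigroupHom s) → rep x = rep y := by
    intro x y hxy
    refine (hrepU x (rep y) (hrepΛ y) ?_).symm
    have heq : monomialOf x - monomialOf (rep y) =
        (monomialOf x - monomialOf y) + (monomialOf y - monomialOf (rep y)) := by abel
    rw [heq]
    exact add_mem hxy (hrepK y)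
  have hWσ : ∀ x : Fin d → ℕ,
      (∑ i, x i • s i) = weight s (Finsupp.equivFunOnFinite.symm x) := by
    intro x
    rw [← sum_univ_smul_eq_weight]
    exact Finset.sum_congr rfl fun i _ => by rw [coeSymm]
  refine ⟨?_, ?_, ?_⟩
  · -- homogeneity
    intro p hp
    rw [hG] at hp
    obtain ⟨σ, a, haΛ, haσ, hane, rfl⟩ := hp
    obtain ⟨hρΛ, hρσ⟩ := hρ σ ⟨a, haΛ, haσ⟩
    refine ⟨deg σ, ?_⟩
    rw [monomialOf_eq, monomialOf_eq, ← mem_weightedHomogeneousSubmodule]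
    refine sub_mem (isWeightedHomogeneous_monomial _ _ _ ?_)
      (isWeightedHomogeneous_monomial _ _ _ ?_)
    · rw [deg_weight s deg hdeg0' hdegadd, ← hWσ, hρσ]
    · rw [deg_weight s deg hdeg0' hdegadd, ← hWσ, haσ]
  · -- span G = ker
    refine le_antisymm ?_ ?_
    · rw [Ideal.span_le]
      rintro p hp
      rw [hG] at hp
      obtain ⟨σ, a, haΛ, haσ, hane, rfl⟩ := hp
      obtain ⟨hρΛ, hρσ⟩ := hρ σ ⟨a, haΛ, haσ⟩
      rw [SetLike.mem_coe, monomialOf_eq, monomialOf_eq]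
      refine binomial_mem_ker s ?_
      rw [← hWσ, ← hWσ, hρσ, haσ]
    · intro f hf
      have h1 : f ∈ Submodule.span ℤ (BinSet s) := ker_le_span_bin s f hf
      have h2 : BinSet s ⊆ ((Ideal.span G).restrictScalars ℤ : Set _) := by
        rintro p ⟨m, m', hws, rfl⟩
        exact binomial_mem_spanG s deg hdeg0' hdegadd hw1 Λ rep hrepΛ hrepK ρ hρ G hG
          (weight (fun i => deg (s i)) m) m m' hws rfl
      exact Submodule.span_le.mpr h2 h1
  · -- minimality
    intro G' hss hEq
    obtain ⟨p, hpG, hpG'⟩ := Set.exists_of_ssubset hss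
    have hpG2 := hpG
    rw [hG] at hpG2
    obtain ⟨σ₀, a₀, ha₀Λ, ha₀σ, ha₀ne, hpdef⟩ := hpG2
    obtain ⟨hρ₀Λ, hρ₀σ⟩ := hρ σ₀ ⟨a₀, ha₀Λ, ha₀σ⟩
    have hGker : Ideal.span G ≤ RingHom.ker (semigroupHom s) := by
      rw [Ideal.span_le]
      rintro g hg
      rw [hG] at hg
      obtain ⟨σ, a, haΛ, haσ, hane, rfl⟩ := hg
      obtain ⟨hρΛ, hρσ⟩ := hρ σ ⟨a, haΛ, haσ⟩
      rw [SetLike.mem_coe, monomialOf_eq, monomialOf_eq]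
      refine binomial_mem_ker s ?_
      rw [← hWσ, ← hWσ, hρσ, haσ]
    have hpspan : p ∈ Ideal.span G' := by
      rw [hEq]
      exact hGker (Ideal.subset_span hpG)
    obtain ⟨cf, hcfsupp, hcfsum⟩ := Submodule.mem_span_set.mp hpspan
    set q : MvPolynomial (Fin d) ℤ :=
      ∑ g ∈ cf.support, (constantCoeff (cf g)) • g with hq
    have hpq : p - q ∈ augIdeal d * RingHom.ker (semigroupHom s) := by
      have hsplit : p - q = ∑ g ∈ cf.support,
          (cf g • g - (constantCoeff (cf g) : ℤ) • g) := by
        rw [Finset.sum_sub_distrib, ← hcfsum, hq, Finsupp.sum]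
      rw [hsplit]
      refine Submodule.sum_mem _ fun g hg => ?_
      have hgG' : g ∈ G' := hcfsupp hg
      have hgker : g ∈ RingHom.ker (semigroupHom s) := by
        rw [← hEq]
        exact Ideal.subset_span hgG'
      have heq2 : cf g • g - (constantCoeff (cf g) : ℤ) • g =
          (cf g - C (constantCoeff (cf g))) * g := by
        rw [sub_mul, smul_eq_mul]
        congr 1
        rw [MvPolynomial.smul_eq_C_mul]
      rw [heq2]
      refine Ideal.mul_mem_mul ?_ hgker
      rw [augIdeal, RingHom.mem_ker, map_sub, constantCoeff_C, sub_self]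
    have hcongr' : ∀ x y : Fin d →₀ ℕ, monomial x (1:ℤ) - monomial y 1 ∈
        augIdeal d * RingHom.ker (semigroupHom s) → rep ⇑x = rep ⇑y := by
      intro x y h
      apply hrepcongr
      rwa [monomialOf_coe, monomialOf_coe]
    have hθK := theta_ker_K s rep a₀ hcongr'
    have hθmonoOf : ∀ x : Fin d → ℕ,
        theta rep a₀ (monomialOf x) = if rep x = a₀ then 1 else 0 := by
      intro x
      rw [monomialOf_eq, theta_monomial, coeSymm]
    have hθp : theta rep a₀ p = -1 := by
      rw [hpdef, map_sub, hθmonoOf, hθmonoOf, hrepself _ hρ₀Λ, hrepself _ ha₀Λ,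
        if_neg (fun h => ha₀ne h.symm), if_pos rfl]
      ring
    have hθg : ∀ g ∈ G', theta rep a₀ g = 0 := by
      intro g hg
      have hgG : g ∈ G := hss.subset hg
      rw [hG] at hgG
      obtain ⟨τ, b, hbΛ, hbσ, hbne, rfl⟩ := hgG
      obtain ⟨hρτΛ, hρτσ⟩ := hρ τ ⟨b, hbΛ, hbσ⟩
      rw [map_sub, hθmonoOf, hθmonoOf, hrepself _ hρτΛ, hrepself _ hbΛ]
      rw [if_neg ?h1, if_neg ?h2, sub_self]
      case h1 =>
        intro h
        have hτσ₀ : τ = σ₀ := by rw [← hρτσ, h, ha₀σ]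
        exact ha₀ne (hτσ₀ ▸ h).symm
      case h2 =>
        intro h
        have hτσ₀ : τ = σ₀ := by rw [← hbσ, h, ha₀σ]
        apply hpG'
        rw [hpdef, ← h, ← hτσ₀]
        exact hg
    have hθq : theta rep a₀ q = 0 := by
      rw [hq, map_sum]
      refine Finset.sum_eq_zero fun g hg => ?_
      rw [map_smul, hθg g (hcfsupp hg), smul_zero]
    have hfinal := hθK _ hpq
    rw [map_sub, hθp, hθq] at hfinal
    norm_num at hfinal
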